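/- Let W be a d-dimensional Brownian motion, f : ℝᵈ → ℝ with ∇³f having operator norm bounded by M₂, and let (xₜ,vₜ) be the stationary underdamped Langevin diffusion with ‖v_r‖_{L₄} ≤ 3^{1/4}√(ud) for all r. Then ‖σu ∫_{t_n}^{t_{n+1}} ∫_{t_n}^{r₁} ∫_{t_n}^{r₂} ∇³f(x_{t_n})(v_{r₂}, W_{t_n,r₃}) dr₃ dr₂ dr₁‖_{L₂} ≤ (8√3/105) σ u^{1.5} M₂ d h^{3.5}, where h = t_{n+1} − t_n. -/

import Mathlib

open MeasureTheory ENNReal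

namespace Stmt14

/-- The simplex `tn < r₃ ≤ r₂ ≤ r₁ ≤ tn + h` as a subset of `ℝ × ℝ × ℝ`. -/
def S (tn h : ℝ) : Set (ℝ × ℝ × ℝ) :=
  {p | p.1 ∈ Set.Ioc tn (tn + h) ∧ p.2.1 ∈ Set.Ioc tn p.1 ∧ p.2.2 ∈ Set.Ioc tn p.2.1}

lemma measS (tn h : ℝ) : MeasurableSet (S tn h) := by
  have : S tn h =
      ({p : ℝ × ℝ × ℝ | tn < p.1} ∩ {p | p.1 ≤ tn + h}) ∩
      (({p | tn < p.2.1} ∩ {p | p.2.1 ≤ p.1}) ∩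
       ({p | tn < p.2.2} ∩ {p | p.2.2 ≤ p.2.1})) := by
    ext p; simp only [S, Set.mem_setOf_eq, Set.mem_Ioc, Set.mem_inter_iff]
  rw [this]
  exact (((measurableSet_lt measurable_const measurable_fst).inter
      (measurableSet_le measurable_fst measurable_const)).inter
    (((measurableSet_lt measurable_const measurable_snd.fst).inter
      (measurableSet_le measurable_snd.fst measurable_fst)).inter
     ((measurableSet_lt measurable_const measurable_snd.snd).inter
      (measurableSet_le measurable_snd.snd measurable_snd.fst))))

lemma iter_eq (tn h : ℝ) (H : ℝ × ℝ × ℝ → ℝ≥0∞) (hH : Measurable H) :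
    (∫⁻ r₁ in Set.Ioc tn (tn + h), ∫⁻ r₂ in Set.Ioc tn r₁, ∫⁻ r₃ in Set.Ioc tn r₂,
      H (r₁, r₂, r₃)) = ∫⁻ p in S tn h, H p := by
  have hS := measS tn h
  rw [← lintegral_indicator hS, Measure.volume_eq_prod,
    lintegral_prod _ ((hH.indicator hS).aemeasurable),
    ← lintegral_indicator (measurableSet_Ioc : MeasurableSet (Set.Ioc tn (tn + h)))]
  refine lintegral_congr fun r₁ => ?_
  rw [Measure.volume_eq_prod,
    lintegral_prod _ (by exact ((hH.indicator hS).comp measurable_prodMk_left).aemeasurable)]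
  by_cases h₁ : r₁ ∈ Set.Ioc tn (tn + h)
  · rw [Set.indicator_of_mem h₁, ← lintegral_indicator measurableSet_Ioc]
    refine lintegral_congr fun r₂ => ?_
    by_cases h₂ : r₂ ∈ Set.Ioc tn r₁
    · rw [Set.indicator_of_mem h₂, ← lintegral_indicator measurableSet_Ioc]
      refine lintegral_congr fun r₃ => ?_
      by_cases h₃ : r₃ ∈ Set.Ioc tn r₂
      · rw [Set.indicator_of_mem h₃, Set.indicator_of_mem (show (r₁, r₂, r₃) ∈ S tn h from ⟨h₁, h₂, h₃⟩)]
      · rw [Set.indicator_of_notMem h₃, Set.indicator_of_notMem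
          (fun hp => h₃ hp.2.2)]
    · rw [Set.indicator_of_notMem h₂, ← lintegral_zero]
      refine (lintegral_congr fun r₃ => ?_).symm
      exact Set.indicator_of_notMem (fun hp => h₂ hp.2.1) _
  · rw [Set.indicator_of_notMem h₁, ← lintegral_zero]
    refine (lintegral_congr fun r₂ => ?_).symm
    rw [← lintegral_zero]
    refine lintegral_congr fun r₃ => ?_
    exact Set.indicator_of_notMem (fun hp => h₁ hp.1) _

lemma lint_rpow (a b c p : ℝ) (hab : a ≤ b) (hc : 0 ≤ c) (hp : 0 ≤ p) :
    (∫⁻ x in Set.Ioc a b, ENNReal.ofReal (c * (x - a) ^ p)) =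
      ENNReal.ofReal (c / (p + 1) * (b - a) ^ (p + 1)) := by
  have hp1 : p + 1 ≠ 0 := by positivity
  have h0 : IntervalIntegrable (fun x : ℝ => x ^ p) volume 0 (b - a) :=
    intervalIntegral.intervalIntegrable_rpow (Or.inl hp)
  have h1 := h0.comp_sub_right a
  rw [zero_add, sub_add_cancel] at h1
  have hInt : IntegrableOn (fun x => c * (x - a) ^ p) (Set.Ioc a b) := by
    rw [← intervalIntegrable_iff_integrableOn_Ioc_of_le hab]
    exact h1.const_mul c
  have hnn : 0 ≤ᵐ[volume.restrict (Set.Ioc a b)] fun x => c * (x - a) ^ p := by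
    refine ae_restrict_of_forall_mem measurableSet_Ioc fun x hx => ?_
    have : (0:ℝ) ≤ x - a := by linarith [hx.1]
    positivity
  rw [← ofReal_integral_eq_lintegral_ofReal hInt hnn]
  congr 1
  rw [← intervalIntegral.integral_of_le hab, intervalIntegral.integral_const_mul,
    intervalIntegral.integral_comp_sub_right (fun x => x ^ p) a,
    integral_rpow (Or.inl (by linarith)), sub_self,
    Real.zero_rpow hp1]
  ring


lemma memS {tn h : ℝ} {p : ℝ × ℝ × ℝ} :
    p ∈ S tn h ↔ p.1 ∈ Set.Ioc tn (tn + h) ∧ p.2.1 ∈ Set.Ioc tn p.1 ∧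
      p.2.2 ∈ Set.Ioc tn p.2.1 := Iff.rfl


lemma measH (tn c : ℝ) (q : ℝ) (hq : 0 ≤ q) :
    Measurable fun p : ℝ × ℝ × ℝ => ENNReal.ofReal (c * (p.2.2 - tn) ^ q) :=
  (measurable_const.mul ((Real.continuous_rpow_const hq).measurable.comp
    (measurable_snd.snd.sub measurable_const))).ennreal_ofReal

lemma J_eq (tn h c : ℝ) (hh : 0 ≤ h) (hc : 0 ≤ c) :
    (∫⁻ p in S tn h, ENNReal.ofReal (c * (p.2.2 - tn) ^ (1/2 : ℝ))) =
      ENNReal.ofReal (8 / 105 * c * h ^ (7/2 : ℝ)) := by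
  rw [← iter_eq tn h _ (measH tn c (1/2) (by norm_num))]
  have inner3 : ∀ r₂ : ℝ, tn ≤ r₂ →
      (∫⁻ r₃ in Set.Ioc tn r₂, ENNReal.ofReal (c * (r₃ - tn) ^ (1/2 : ℝ))) =
        ENNReal.ofReal (2/3 * c * (r₂ - tn) ^ (3/2 : ℝ)) := by
    intro r₂ h2
    rw [lint_rpow tn r₂ c (1/2) h2 hc (by norm_num)]
    norm_num
    congr 1; ring
  have inner2 : ∀ r₁ : ℝ, tn ≤ r₁ →
      (∫⁻ r₂ in Set.Ioc tn r₁, ∫⁻ r₃ in Set.Ioc tn r₂,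
          ENNReal.ofReal (c * (r₃ - tn) ^ (1/2 : ℝ))) =
        ENNReal.ofReal (4/15 * c * (r₁ - tn) ^ (5/2 : ℝ)) := by
    intro r₁ h1
    rw [setLIntegral_congr_fun measurableSet_Ioc
      (fun r₂ h2 => inner3 r₂ h2.1.le),
      lint_rpow tn r₁ (2/3*c) (3/2) h1 (by positivity) (by norm_num)]
    norm_num
    congr 1; ring
  rw [setLIntegral_congr_fun measurableSet_Ioc
      (fun r₁ h1 => inner2 r₁ h1.1.le),
    lint_rpow tn (tn + h) (4/15*c) (5/2) (by linarith) (by positivity) (by norm_num),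
    add_sub_cancel_left]
  norm_num
  congr 1; ring

end Stmt14

open Stmt14

/-- With `σ = √(2γu)`, `h = t_{n+1} − t_n`, a Brownian motion `W`
satisfying the fourth-moment bound `‖W_{t_n,r}‖_{L₄} ≤ 3^{1/4}√(d(r−t_n))`, a
stationary underdamped Langevin velocity with `‖v_r‖_{L₄} ≤ 3^{1/4}√(ud)`, and
`‖∇³f‖_op ≤ M₂`, the iterated stochastic integral satisfies
`‖σu ∫∫∫ ∇³f(x_{t_n})(v_{r₂}, W_{t_n,r₃}) dr₃ dr₂ dr₁‖_{L₂}
  ≤ (8√3/105) σ u^{1.5} M₂ d h^{3.5}`. -/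

theorem triple_integral_third_deriv_L2_bound {Ω : Type*} [MeasurableSpace Ω]
    (P : Measure Ω) [IsProbabilityMeasure P] {d : ℕ}
    (f : EuclideanSpace ℝ (Fin d) → ℝ) (hf : ContDiff ℝ 3 f)
    (M₂ γ u : ℝ) (hM₂ : 0 ≤ M₂) (hγ : 0 < γ) (hu : 0 < u)
    (hbound : ∀ z a b, ‖fderiv ℝ (fderiv ℝ (gradient f)) z a b‖ ≤ M₂ * ‖a‖ * ‖b‖)
    (W x v : ℝ → Ω → EuclideanSpace ℝ (Fin d))
    (tn h : ℝ) (hh : 0 < h)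
    (hWmeas : Measurable (Function.uncurry W))
    (hvmeas : Measurable (Function.uncurry v))
    (hxmeas : Measurable (x tn))
    (hv4 : ∀ r : ℝ, eLpNorm (v r) 4 P
        ≤ ENNReal.ofReal ((3 : ℝ) ^ ((1 : ℝ) / 4) * Real.sqrt (u * d)))
    (hW4 : ∀ r : ℝ, tn ≤ r → r ≤ tn + h →
      eLpNorm (fun ω => W r ω - W tn ω) 4 P
        ≤ ENNReal.ofReal ((3 : ℝ) ^ ((1 : ℝ) / 4) * Real.sqrt (d * (r - tn)))) :
    eLpNorm (fun ω =>
        (Real.sqrt (2 * γ * u) * u) •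
          ∫ r₁ in tn..(tn + h), ∫ r₂ in tn..r₁, ∫ r₃ in tn..r₂,
            fderiv ℝ (fderiv ℝ (gradient f)) (x tn ω) (v r₂ ω) (W r₃ ω - W tn ω)) 2 P
      ≤ ENNReal.ofReal (8 * Real.sqrt 3 / 105 * Real.sqrt (2 * γ * u)
          * u ^ (1.5 : ℝ) * M₂ * d * h ^ (3.5 : ℝ)) := by
  classical
  set σ : ℝ := Real.sqrt (2 * γ * u) with hσdef
  have hσ0 : 0 ≤ σ := Real.sqrt_nonneg _
  set T : Ω → EuclideanSpace ℝ (Fin d) := fun ω =>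
    ∫ r₁ in tn..(tn + h), ∫ r₂ in tn..r₁, ∫ r₃ in tn..r₂,
      fderiv ℝ (fderiv ℝ (gradient f)) (x tn ω) (v r₂ ω) (W r₃ ω - W tn ω) with hTdef
  set M' : ℝ≥0∞ := ENNReal.ofReal M₂ with hM'def
  set F : ℝ × ℝ × ℝ → Ω → ℝ≥0∞ := fun p ω =>
    M' * ‖v p.2.1 ω‖₊ * ‖W p.2.2 ω - W tn ω‖₊ with hFdef
  set wgt : ℝ × ℝ × ℝ → ℝ≥0∞ := fun p =>
    ENNReal.ofReal ((p.2.2 - tn) ^ (1/4 : ℝ)) with hwgtdef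
  set G : Ω → ℝ≥0∞ := fun ω => ∫⁻ p in S tn h, (F p ω / wgt p) ^ (2:ℝ) with hGdef
  set A : ℝ≥0∞ := ENNReal.ofReal (8 / 105 * 1 * h ^ (7/2 : ℝ)) with hAdef
  -- sections of v and W are measurable
  have hv_r : ∀ ω, Measurable fun r => v r ω := fun ω =>
    hvmeas.comp (measurable_id.prodMk measurable_const)
  have hW_r : ∀ ω, Measurable fun r => W r ω := fun ω =>
    hWmeas.comp (measurable_id.prodMk measurable_const)
  have hv_ω : ∀ r, Measurable fun ω => v r ω := fun r =>
    hvmeas.comp (measurable_const.prodMk measurable_id)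
  have hW_ω : ∀ r, Measurable fun ω => W r ω := fun r =>
    hWmeas.comp (measurable_const.prodMk measurable_id)
  have hFsec : ∀ ω, Measurable fun p => F p ω := fun ω =>
    ((measurable_const.mul (((hv_r ω).comp measurable_snd.fst).enorm)).mul
      ((((hW_r ω).comp measurable_snd.snd).sub measurable_const).enorm))
  have hwgtm : Measurable wgt :=
    ((Real.continuous_rpow_const (by norm_num)).measurable.comp
      (measurable_snd.snd.sub measurable_const)).ennreal_ofReal
  have hconj : Real.HolderConjugate 2 2 := Real.HolderConjugate.two_two
  -- Step 1: pointwise bound on ‖T ω‖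
  have hTbound : ∀ ω, (‖T ω‖₊ : ℝ≥0∞) ≤ ∫⁻ p in S tn h, F p ω := by
    intro ω
    rw [← iter_eq tn h _ (hFsec ω)]
    have step3 : ∀ r₁ r₂ : ℝ, tn ≤ r₂ →
        (‖∫ r₃ in tn..r₂,
            fderiv ℝ (fderiv ℝ (gradient f)) (x tn ω) (v r₂ ω) (W r₃ ω - W tn ω)‖₊ : ℝ≥0∞)
          ≤ ∫⁻ r₃ in Set.Ioc tn r₂, F (r₁, r₂, r₃) ω := by
      intro r₁ r₂ h2
      rw [intervalIntegral.integral_of_le h2]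
      refine (enorm_integral_le_lintegral_enorm _).trans ?_
      refine lintegral_mono fun r₃ => ?_
      rw [← ofReal_norm]
      refine (ENNReal.ofReal_le_ofReal (hbound _ _ _)).trans (le_of_eq ?_)
      rw [ENNReal.ofReal_mul (by positivity), ENNReal.ofReal_mul hM₂,
        ofReal_norm, ofReal_norm]
      rfl
    have step2 : ∀ r₁ : ℝ, tn ≤ r₁ →
        (‖∫ r₂ in tn..r₁, ∫ r₃ in tn..r₂,
            fderiv ℝ (fderiv ℝ (gradient f)) (x tn ω) (v r₂ ω) (W r₃ ω - W tn ω)‖₊ : ℝ≥0∞)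
          ≤ ∫⁻ r₂ in Set.Ioc tn r₁, ∫⁻ r₃ in Set.Ioc tn r₂, F (r₁, r₂, r₃) ω := by
      intro r₁ h1
      rw [intervalIntegral.integral_of_le h1]
      refine (enorm_integral_le_lintegral_enorm _).trans ?_
      exact lintegral_mono_ae (ae_restrict_of_forall_mem measurableSet_Ioc
        fun r₂ h2 => step3 r₁ r₂ h2.1.le)
    simp only [hTdef]
    rw [intervalIntegral.integral_of_le (by linarith : tn ≤ tn + h)]
    refine (enorm_integral_le_lintegral_enorm _).trans ?_
    exact lintegral_mono_ae (ae_restrict_of_forall_mem measurableSet_Ioc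
      fun r₁ h1 => step2 r₁ h1.1.le)
  -- Step 2: Cauchy–Schwarz with weight
  have hA : (∫⁻ p in S tn h, wgt p ^ (2:ℝ)) = A := by
    rw [hAdef, ← J_eq tn h 1 hh.le zero_le_one]
    refine setLIntegral_congr_fun (measS tn h) (fun p hp => ?_)
    have h3 : (0:ℝ) ≤ p.2.2 - tn := by
      have := (memS.mp hp).2.2.1; linarith
    rw [hwgtdef, ENNReal.ofReal_rpow_of_nonneg (by positivity) (by norm_num),
      ← Real.rpow_mul h3, one_mul]
    norm_num
  have hCS : ∀ ω, (∫⁻ p in S tn h, F p ω) ≤ A ^ (1/2:ℝ) * G ω ^ (1/2:ℝ) := by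
    intro ω
    have h1 : (∫⁻ p in S tn h, F p ω) = ∫⁻ p in S tn h, wgt p * (F p ω / wgt p) := by
      refine setLIntegral_congr_fun (measS tn h) (fun p hp => ?_)
      have h3 : (0:ℝ) < p.2.2 - tn := by
        have := (memS.mp hp).2.2.1; linarith
      rw [ENNReal.mul_div_cancel]
      · rw [hwgtdef]
        simp only [ne_eq, ENNReal.ofReal_eq_zero, not_le]
        positivity
      · exact ENNReal.ofReal_ne_top
    rw [h1, ← hA, hGdef]
    exact ENNReal.lintegral_mul_le_Lp_mul_Lq _ hconj hwgtm.aemeasurable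
      ((hFsec ω).div hwgtm).aemeasurable
  have hsq : ∀ ω, (‖T ω‖₊ : ℝ≥0∞) ^ (2:ℝ) ≤ A * G ω := by
    intro ω
    calc (‖T ω‖₊ : ℝ≥0∞) ^ (2:ℝ) ≤ (A ^ (1/2:ℝ) * G ω ^ (1/2:ℝ)) ^ (2:ℝ) :=
      ENNReal.rpow_le_rpow ((hTbound ω).trans (hCS ω)) (by norm_num)
    _ = A * G ω := by
      rw [ENNReal.mul_rpow_of_nonneg _ _ (by norm_num : (0:ℝ) ≤ 2),
        ← ENNReal.rpow_mul, ← ENNReal.rpow_mul]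
      norm_num
  -- joint measurability & swap
  have hjoint : Measurable fun q : Ω × (ℝ × ℝ × ℝ) => (F q.2 q.1 / wgt q.2) ^ (2:ℝ) := by
    have h1 : Measurable fun q : Ω × (ℝ × ℝ × ℝ) => F q.2 q.1 := by
      simp only [hFdef]
      exact (measurable_const.mul
        ((hvmeas.comp ((measurable_snd.snd.fst).prodMk measurable_fst)).enorm)).mul
        (((hWmeas.comp ((measurable_snd.snd.snd).prodMk measurable_fst)).sub
          (hWmeas.comp (measurable_const.prodMk measurable_fst))).enorm)
    exact ENNReal.continuous_rpow_const.measurable.comp (h1.div (hwgtm.comp measurable_snd))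
  have hswap : (∫⁻ ω, G ω ∂P) = ∫⁻ p in S tn h, ∫⁻ ω, (F p ω / wgt p) ^ (2:ℝ) ∂P := by
    simp only [hGdef]
    exact lintegral_lintegral_swap hjoint.aemeasurable
  -- moment bound for each p in the simplex
  have hmom : ∀ p ∈ S tn h, (∫⁻ ω, (F p ω / wgt p) ^ (2:ℝ) ∂P) ≤
      ENNReal.ofReal (3 * M₂^2 * u * (d:ℝ)^2 * (p.2.2 - tn) ^ (1/2:ℝ)) := by
    rintro ⟨r₁, r₂, r₃⟩ hp
    obtain ⟨h1, h2, h3⟩ := memS.mp hp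
    have ht3 : (0:ℝ) < r₃ - tn := sub_pos.2 h3.1
    have hr3h : r₃ ≤ tn + h := h3.2.trans (h2.2.trans h1.2)
    set t : ℝ := r₃ - tn with htdef
    set C : ℝ≥0∞ := M' ^ (2:ℝ) / wgt (r₁, r₂, r₃) ^ (2:ℝ) with hCdef
    have hwgt2 : wgt (r₁, r₂, r₃) ^ (2:ℝ) = ENNReal.ofReal (t ^ (1/2:ℝ)) := by
      rw [hwgtdef]
      show (ENNReal.ofReal (t ^ (1/4:ℝ))) ^ (2:ℝ) = _
      rw [ENNReal.ofReal_rpow_of_nonneg (by positivity) (by norm_num : (0:ℝ) ≤ 2),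
        ← Real.rpow_mul ht3.le]
      norm_num
    have hrw : ∀ ω : Ω, (F (r₁, r₂, r₃) ω / wgt (r₁, r₂, r₃)) ^ (2:ℝ)
        = C * ((‖v r₂ ω‖₊ : ℝ≥0∞) ^ (2:ℝ) * (‖W r₃ ω - W tn ω‖₊ : ℝ≥0∞) ^ (2:ℝ)) := by
      intro ω
      rw [hCdef, hFdef]
      show (M' * ‖v r₂ ω‖₊ * ‖W r₃ ω - W tn ω‖₊ / wgt (r₁, r₂, r₃)) ^ (2:ℝ) = _
      rw [ENNReal.div_rpow_of_nonneg _ _ (by norm_num : (0:ℝ) ≤ 2),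
        ENNReal.mul_rpow_of_nonneg _ _ (by norm_num : (0:ℝ) ≤ 2),
        ENNReal.mul_rpow_of_nonneg _ _ (by norm_num : (0:ℝ) ≤ 2),
        div_eq_mul_inv, div_eq_mul_inv]
      ring
    have hCne : C ≠ ∞ := by
      rw [hCdef]
      refine (ENNReal.div_lt_top ?_ ?_).ne
      · exact ENNReal.rpow_ne_top_of_nonneg (by norm_num) ENNReal.ofReal_ne_top
      · rw [hwgt2]
        simp only [ne_eq, ENNReal.ofReal_eq_zero, not_le]
        positivity
    simp only [hrw]
    rw [lintegral_const_mul' C _ hCne]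
    have hmv : Measurable fun ω => (‖v r₂ ω‖₊ : ℝ≥0∞) ^ (2:ℝ) :=
      ENNReal.continuous_rpow_const.measurable.comp (hv_ω r₂).enorm
    have hmw : Measurable fun ω => (‖W r₃ ω - W tn ω‖₊ : ℝ≥0∞) ^ (2:ℝ) :=
      ENNReal.continuous_rpow_const.measurable.comp ((hW_ω r₃).sub (hW_ω tn)).enorm
    have hcs2 := ENNReal.lintegral_mul_le_Lp_mul_Lq P hconj hmv.aemeasurable hmw.aemeasurable
    have hv' : (∫⁻ ω, ((‖v r₂ ω‖₊ : ℝ≥0∞) ^ (2:ℝ)) ^ (2:ℝ) ∂P) ^ (1/2:ℝ)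
        ≤ ENNReal.ofReal (Real.sqrt 3 * (u * (d:ℝ))) := by
      have h4 := hv4 r₂
      rw [eLpNorm_eq_lintegral_rpow_enorm_toReal (by norm_num) (by norm_num)] at h4
      simp only [ENNReal.toReal_ofNat] at h4
      have hsimp : ∀ ω : Ω, ((‖v r₂ ω‖₊ : ℝ≥0∞) ^ (2:ℝ)) ^ (2:ℝ)
          = (‖v r₂ ω‖₊ : ℝ≥0∞) ^ (4:ℝ) := by
        intro ω; rw [← ENNReal.rpow_mul]; norm_num
      calc (∫⁻ ω, ((‖v r₂ ω‖₊ : ℝ≥0∞) ^ (2:ℝ)) ^ (2:ℝ) ∂P) ^ (1/2:ℝ)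
          = ((∫⁻ ω, (‖v r₂ ω‖₊ : ℝ≥0∞) ^ (4:ℝ) ∂P) ^ ((1:ℝ)/4)) ^ (2:ℝ) := by
            rw [lintegral_congr hsimp, ← ENNReal.rpow_mul]
            norm_num
        _ ≤ (ENNReal.ofReal ((3:ℝ) ^ ((1:ℝ)/4) * Real.sqrt (u * (d:ℝ)))) ^ (2:ℝ) :=
            ENNReal.rpow_le_rpow h4 (by norm_num)
        _ = ENNReal.ofReal (Real.sqrt 3 * (u * (d:ℝ))) := by
            rw [ENNReal.ofReal_rpow_of_nonneg (by positivity) (by norm_num : (0:ℝ) ≤ 2)]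
            congr 1
            rw [Real.mul_rpow (by positivity) (Real.sqrt_nonneg _),
              ← Real.rpow_mul (by norm_num : (0:ℝ) ≤ 3),
              Real.sqrt_eq_rpow (u * (d:ℝ)), ← Real.rpow_mul (by positivity)]
            rw [Real.sqrt_eq_rpow]
            norm_num
    have hw' : (∫⁻ ω, ((‖W r₃ ω - W tn ω‖₊ : ℝ≥0∞) ^ (2:ℝ)) ^ (2:ℝ) ∂P) ^ (1/2:ℝ)
        ≤ ENNReal.ofReal (Real.sqrt 3 * ((d:ℝ) * t)) := by
      have h4 := hW4 r₃ h3.1.le hr3h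
      rw [eLpNorm_eq_lintegral_rpow_enorm_toReal (by norm_num) (by norm_num)] at h4
      simp only [ENNReal.toReal_ofNat] at h4
      have hsimp : ∀ ω : Ω, ((‖W r₃ ω - W tn ω‖₊ : ℝ≥0∞) ^ (2:ℝ)) ^ (2:ℝ)
          = (‖W r₃ ω - W tn ω‖₊ : ℝ≥0∞) ^ (4:ℝ) := by
        intro ω; rw [← ENNReal.rpow_mul]; norm_num
      calc (∫⁻ ω, ((‖W r₃ ω - W tn ω‖₊ : ℝ≥0∞) ^ (2:ℝ)) ^ (2:ℝ) ∂P) ^ (1/2:ℝ)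
          = ((∫⁻ ω, (‖W r₃ ω - W tn ω‖₊ : ℝ≥0∞) ^ (4:ℝ) ∂P) ^ ((1:ℝ)/4)) ^ (2:ℝ) := by
            rw [lintegral_congr hsimp, ← ENNReal.rpow_mul]
            norm_num
        _ ≤ (ENNReal.ofReal ((3:ℝ) ^ ((1:ℝ)/4) * Real.sqrt ((d:ℝ) * t))) ^ (2:ℝ) :=
            ENNReal.rpow_le_rpow h4 (by norm_num)
        _ = ENNReal.ofReal (Real.sqrt 3 * ((d:ℝ) * t)) := by
            rw [ENNReal.ofReal_rpow_of_nonneg (by positivity) (by norm_num : (0:ℝ) ≤ 2)]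
            congr 1
            rw [Real.mul_rpow (by positivity) (Real.sqrt_nonneg _),
              ← Real.rpow_mul (by norm_num : (0:ℝ) ≤ 3),
              Real.sqrt_eq_rpow ((d:ℝ) * t), ← Real.rpow_mul (by positivity)]
            rw [Real.sqrt_eq_rpow]
            norm_num
    calc C * ∫⁻ ω, (‖v r₂ ω‖₊ : ℝ≥0∞) ^ (2:ℝ) * (‖W r₃ ω - W tn ω‖₊ : ℝ≥0∞) ^ (2:ℝ) ∂P
        ≤ C * ((∫⁻ ω, ((‖v r₂ ω‖₊ : ℝ≥0∞) ^ (2:ℝ)) ^ (2:ℝ) ∂P) ^ (1/2:ℝ)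
            * (∫⁻ ω, ((‖W r₃ ω - W tn ω‖₊ : ℝ≥0∞) ^ (2:ℝ)) ^ (2:ℝ) ∂P) ^ (1/2:ℝ)) :=
          mul_le_mul_right hcs2 C
      _ ≤ C * (ENNReal.ofReal (Real.sqrt 3 * (u * (d:ℝ)))
            * ENNReal.ofReal (Real.sqrt 3 * ((d:ℝ) * t))) :=
          mul_le_mul_right (mul_le_mul' hv' hw') C
      _ = ENNReal.ofReal (M₂ ^ (2:ℝ) * (Real.sqrt 3 * (u * (d:ℝ))
            * (Real.sqrt 3 * ((d:ℝ) * t)))) / ENNReal.ofReal (t ^ (1/2:ℝ)) := by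
          have hdivmul : ∀ (m k : ℝ) (s : ℝ≥0∞), ENNReal.ofReal m / s * ENNReal.ofReal k
              = ENNReal.ofReal m * ENNReal.ofReal k / s := by
            intro m k s
            rw [div_eq_mul_inv, div_eq_mul_inv]
            ring
          rw [hCdef, hwgt2, hM'def, ENNReal.ofReal_rpow_of_nonneg hM₂ (by norm_num : (0:ℝ) ≤ 2),
            ← ENNReal.ofReal_mul (by positivity), hdivmul,
            ← ENNReal.ofReal_mul (by positivity)]
      _ = ENNReal.ofReal (M₂ ^ (2:ℝ) * (Real.sqrt 3 * (u * (d:ℝ))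
            * (Real.sqrt 3 * ((d:ℝ) * t))) / t ^ (1/2:ℝ)) :=
          (ENNReal.ofReal_div_of_pos (by positivity)).symm
      _ = ENNReal.ofReal (3 * M₂^2 * u * (d:ℝ)^2 * t ^ (1/2:ℝ)) := by
          congr 1
          have e3 : Real.sqrt 3 * Real.sqrt 3 = 3 := Real.mul_self_sqrt (by norm_num)
          have e12 : t ^ (1/2:ℝ) * t ^ (1/2:ℝ) = t := by
            rw [← Real.sqrt_eq_rpow]; exact Real.mul_self_sqrt ht3.le
          have em : M₂ ^ (2:ℝ) = M₂ ^ 2 := by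
            rw [show (2:ℝ) = ((2:ℕ):ℝ) by norm_num, Real.rpow_natCast]
          rw [em, div_eq_iff (by positivity : t ^ (1/2:ℝ) ≠ 0)]
          linear_combination (M₂^2 * u * (d:ℝ)^2 * t) * e3 - (3 * M₂^2 * u * (d:ℝ)^2) * e12
  -- integrate the moment bound over the simplex
  have hG : (∫⁻ ω, G ω ∂P)
      ≤ ENNReal.ofReal (8/105 * (3 * M₂^2 * u * (d:ℝ)^2) * h ^ (7/2:ℝ)) := by
    rw [hswap, ← J_eq tn h (3 * M₂^2 * u * (d:ℝ)^2) hh.le (by positivity)]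
    exact lintegral_mono_ae (ae_restrict_of_forall_mem (measS tn h) hmom)
  have hT2 : (∫⁻ ω, (‖T ω‖₊ : ℝ≥0∞) ^ (2:ℝ) ∂P)
      ≤ A * ENNReal.ofReal (8/105 * (3 * M₂^2 * u * (d:ℝ)^2) * h ^ (7/2:ℝ)) := by
    calc (∫⁻ ω, (‖T ω‖₊ : ℝ≥0∞) ^ (2:ℝ) ∂P) ≤ ∫⁻ ω, A * G ω ∂P := lintegral_mono hsq
      _ = A * ∫⁻ ω, G ω ∂P :=
          lintegral_const_mul' A _ (by rw [hAdef]; exact ENNReal.ofReal_ne_top)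
      _ ≤ _ := mul_le_mul_right hG A
  have hK : (∫⁻ ω, (‖T ω‖₊ : ℝ≥0∞) ^ (2:ℝ) ∂P) ^ (1/2:ℝ)
      ≤ ENNReal.ofReal (8/105 * Real.sqrt 3 * M₂ * Real.sqrt u * (d:ℝ) * h ^ (7/2:ℝ)) := by
    refine (ENNReal.rpow_le_rpow hT2 (by norm_num)).trans (le_of_eq ?_)
    rw [hAdef, ← ENNReal.ofReal_mul (by positivity),
      ENNReal.ofReal_rpow_of_nonneg (by positivity) (by norm_num)]
    congr 1
    have e3 : Real.sqrt 3 * Real.sqrt 3 = 3 := Real.mul_self_sqrt (by norm_num)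
    have eu : Real.sqrt u * Real.sqrt u = u := Real.mul_self_sqrt hu.le
    have hsqr : (8/105 * 1 * h ^ (7/2:ℝ)) * (8/105 * (3 * M₂^2 * u * (d:ℝ)^2) * h ^ (7/2:ℝ))
        = (8/105 * Real.sqrt 3 * M₂ * Real.sqrt u * (d:ℝ) * h ^ (7/2:ℝ))^2 := by
      rw [pow_two]
      linear_combination (-(192/11025) * M₂^2 * (d:ℝ)^2 * (h^(7/2:ℝ))^2) * eu
        + (-(64/11025) * M₂^2 * (d:ℝ)^2 * (h^(7/2:ℝ))^2 * (Real.sqrt u * Real.sqrt u)) * e3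
    rw [hsqr, ← Real.sqrt_eq_rpow, Real.sqrt_sq (by positivity)]
  -- conclude
  show eLpNorm ((σ * u) • T) 2 P ≤ _
  rw [eLpNorm_const_smul, eLpNorm_eq_lintegral_rpow_enorm_toReal (by norm_num) (by norm_num)]
  simp only [ENNReal.toReal_ofNat]
  calc (‖σ * u‖₊ : ℝ≥0∞) * (∫⁻ ω, (‖T ω‖₊ : ℝ≥0∞) ^ (2:ℝ) ∂P) ^ (1/2:ℝ)
      ≤ ENNReal.ofReal (σ * u)
        * ENNReal.ofReal (8/105 * Real.sqrt 3 * M₂ * Real.sqrt u * (d:ℝ) * h ^ (7/2:ℝ)) := by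
        rw [show (‖σ * u‖₊ : ℝ≥0∞) = ‖σ * u‖ₑ from rfl, Real.enorm_eq_ofReal (by positivity)]
        exact mul_le_mul_right hK _
    _ = ENNReal.ofReal (σ * u * (8/105 * Real.sqrt 3 * M₂ * Real.sqrt u * (d:ℝ) * h ^ (7/2:ℝ))) :=
        (ENNReal.ofReal_mul (by positivity)).symm
    _ ≤ ENNReal.ofReal (8 * Real.sqrt 3 / 105 * σ * u ^ (1.5:ℝ) * M₂ * (d:ℝ) * h ^ (3.5:ℝ)) := by
        refine ENNReal.ofReal_le_ofReal (le_of_eq ?_)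
        have hu15 : u ^ (1.5:ℝ) = u * Real.sqrt u := by
          rw [show (1.5:ℝ) = 1 + (1/2:ℝ) by norm_num, Real.rpow_add hu, Real.rpow_one,
            ← Real.sqrt_eq_rpow]
        have hh35 : h ^ (3.5:ℝ) = h ^ (7/2:ℝ) := by norm_num
        rw [hu15, hh35]
        ring
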